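/- Let α = (α₁, ᾱ) ∈ ℝ × ℝ^{n−1} be a unit vector and g ∈ ℝ^{n−1}, and suppose α₁ ≠ ⟨g, ᾱ⟩. Then the symmetric matrix M = I + g ⊗ g − (α₁·g + ᾱ) ⊗ (α₁·g + ᾱ) is positive definite: for every nonzero v ∈ ℝ^{n−1}, ⟨Mv, v⟩ = |v|² + ⟨g,v⟩² − ⟨(α₁, ᾱ), (⟨g,v⟩, v)⟩² > 0. -/

import Mathlib

open Matrix

/-- For a unit vector `α = (α₁, ᾱ)` with `α₁ ≠ ⟨g, ᾱ⟩`, the symmetric matrix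
`M = I + g ⊗ g − (α₁ g + ᾱ) ⊗ (α₁ g + ᾱ)` is positive definite. -/
theorem M_posDef {m : ℕ} (α₁ : ℝ) (ab g : Fin m → ℝ)
    (hunit : α₁ ^ 2 + ab ⬝ᵥ ab = 1) (hne : α₁ ≠ g ⬝ᵥ ab) :
    ∀ v : Fin m → ℝ, v ≠ 0 →
      (1 + Matrix.vecMulVec g g
          - Matrix.vecMulVec (α₁ • g + ab) (α₁ • g + ab)).mulVec v ⬝ᵥ v =
        v ⬝ᵥ v + (g ⬝ᵥ v) ^ 2 - (α₁ * (g ⬝ᵥ v) + ab ⬝ᵥ v) ^ 2 ∧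
      0 < v ⬝ᵥ v + (g ⬝ᵥ v) ^ 2 - (α₁ * (g ⬝ᵥ v) + ab ⬝ᵥ v) ^ 2 := by
  intro v hv
  constructor
  · have hmv : ∀ (a b : Fin m → ℝ), (vecMulVec a b).mulVec v = (b ⬝ᵥ v) • a := by
      intro a b
      ext i
      simp [vecMulVec, mulVec, dotProduct, Finset.mul_sum, mul_assoc, mul_comm, mul_left_comm]
    rw [Matrix.sub_mulVec, Matrix.add_mulVec, Matrix.one_mulVec, hmv, hmv,
      sub_dotProduct, add_dotProduct, smul_dotProduct,
      smul_dotProduct, add_dotProduct, smul_dotProduct]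
    simp only [smul_eq_mul]
    ring
  · set x : EuclideanSpace ℝ (Fin (m + 1)) := WithLp.toLp 2 (Fin.cons α₁ ab : Fin (m + 1) → ℝ) with hx
    set y : EuclideanSpace ℝ (Fin (m + 1)) := WithLp.toLp 2 (Fin.cons (g ⬝ᵥ v) v : Fin (m + 1) → ℝ) with hy
    have hinner : inner ℝ x y = α₁ * (g ⬝ᵥ v) + ab ⬝ᵥ v := by
      simp [hx, hy, PiLp.inner_apply, Fin.sum_univ_succ, Fin.cons_zero, Fin.cons_succ, dotProduct, RCLike.inner_apply,
        mul_comm]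
    have hxnorm : ‖x‖ ^ 2 = 1 := by
      rw [← real_inner_self_eq_norm_sq]
      simp only [hx, PiLp.inner_apply, RCLike.inner_apply, starRingEnd_apply, star_trivial,
        Fin.sum_univ_succ, Fin.cons_zero, Fin.cons_succ]
      rw [← hunit]
      simp [dotProduct, sq]
    have hynorm : ‖y‖ ^ 2 = (g ⬝ᵥ v) ^ 2 + v ⬝ᵥ v := by
      rw [← real_inner_self_eq_norm_sq]
      simp only [hy, PiLp.inner_apply, RCLike.inner_apply, starRingEnd_apply, star_trivial,
        Fin.sum_univ_succ, Fin.cons_zero, Fin.cons_succ]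
      simp [dotProduct, sq]
    have hy0 : y ≠ 0 := by
      intro h
      apply hv
      ext i
      have := congrArg (fun z => z i.succ) h
      simpa [hy] using this
    have hlt : |inner ℝ x y| < ‖x‖ * ‖y‖ := by
      rcases lt_or_eq_of_le (abs_real_inner_le_norm x y) with h | h
      · exact h
      · exfalso
        have hx0 : x ≠ 0 := by
          intro h0
          rw [h0] at hxnorm; simp at hxnorm
        have hxn : ‖x‖ ≠ 0 := norm_ne_zero_iff.mpr hx0
        have hyn : ‖y‖ ≠ 0 := norm_ne_zero_iff.mpr hy0
        have hdiv : |(inner ℝ x y : ℝ) / (‖x‖ * ‖y‖)| = 1 := by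
          rw [abs_div, h, abs_of_nonneg (by positivity)]
          field_simp
        obtain ⟨-, r, hr, hyx⟩ := (abs_real_inner_div_norm_mul_norm_eq_one_iff x y).mp hdiv
        have hv' : v = r • ab := by
          ext i
          have := congrArg (fun z => z i.succ) hyx
          simpa [hx, hy] using this
        have h0 : g ⬝ᵥ v = r * α₁ := by
          have := congrArg (fun z => z 0) hyx
          simpa [hx, hy] using this
        apply hne
        have : r * α₁ = r * (g ⬝ᵥ ab) := by
          rw [← h0, hv']
          simp [dotProduct, Finset.mul_sum, mul_comm, mul_left_comm]
        exact mul_left_cancel₀ hr this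
    have h2 := sq_lt_sq' (neg_lt_of_abs_lt hlt) (lt_of_abs_lt hlt)
    rw [mul_pow, hxnorm, hynorm, hinner] at h2
    linarith
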